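/- Let n = 2 and let g be a symmetric positive definite 2×2 real matrix with inverse (g^{ij}). Let A = (A_{ijk}) be a totally symmetric (0,3)-tensor that is totally trace-free with respect to g, i.e. Σ_{j,k} g^{jk} A_{ijk} = 0 for every i, and set α^i_{jk} = Σ_l g^{il} A_{ljk}. Then the stress-energy tensor of α vanishes identically: T_g(α) = (1/2)|α|²_g·g + α⊛_g α = 0. -/

import Mathlib

open Matrix BigOperators

noncomputable section

namespace ProjFunctional

/-- Contraction of a (1,2)-tensor: `con(Φ)_i = Σ_k Φ^k_{ik}`. -/
def conT {n : ℕ} (Φ : Fin n → Fin n → Fin n → ℝ) : Fin n → ℝ :=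
  fun i => ∑ k, Φ k i k

/-- `Sym(α)^i_{jk} = δ^i_j α_k + δ^i_k α_j`. -/
def symT {n : ℕ} (α : Fin n → ℝ) : Fin n → Fin n → Fin n → ℝ :=
  fun i j k => (if i = j then α k else 0) + (if i = k then α j else 0)

/-- Trace-free part `Φ₀ = Φ - (1/(n+1)) Sym(con Φ)`. -/
def tfT {n : ℕ} (Φ : Fin n → Fin n → Fin n → ℝ) : Fin n → Fin n → Fin n → ℝ :=
  fun i j k => Φ i j k - (1 / ((n : ℝ) + 1)) * symT (conT Φ) i j k

/-- `(g⊗X)^i_{jk} = X^i g_{jk}`. -/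
def gT {n : ℕ} (g : Matrix (Fin n) (Fin n) ℝ) (X : Fin n → ℝ) :
    Fin n → Fin n → Fin n → ℝ :=
  fun i j k => X i * g j k

/-- Metric trace `(tr_g Φ)^i = Σ_{j,k} g^{jk} Φ^i_{jk}` (using the inverse matrix `g⁻¹`). -/
def trg {n : ℕ} (g : Matrix (Fin n) (Fin n) ℝ) (Φ : Fin n → Fin n → Fin n → ℝ) :
    Fin n → ℝ :=
  fun i => ∑ j, ∑ k, g⁻¹ j k * Φ i j k

/-- Inner product `⟨Φ,Ψ⟩_g = Σ Φ^i_{jk} g^{jb} g^{kc} g_{ia} Ψ^a_{bc}` on (1,2)-tensors. -/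
def ipT {n : ℕ} (g : Matrix (Fin n) (Fin n) ℝ) (Φ Ψ : Fin n → Fin n → Fin n → ℝ) : ℝ :=
  ∑ i, ∑ j, ∑ k, ∑ a, ∑ b, ∑ c, Φ i j k * g⁻¹ j b * g⁻¹ k c * g i a * Ψ a b c

/-- `|Φ|²_g = ⟨Φ,Φ⟩_g`. -/
def norm2T {n : ℕ} (g : Matrix (Fin n) (Fin n) ℝ) (Φ : Fin n → Fin n → Fin n → ℝ) : ℝ :=
  ipT g Φ Φ

/-- `|X|²_g = Σ g_{ij} X^i X^j` for a vector `X`. -/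
def vnorm2 {n : ℕ} (g : Matrix (Fin n) (Fin n) ℝ) (X : Fin n → ℝ) : ℝ :=
  ∑ i, ∑ j, g i j * X i * X j

/-- `⟨X,Y⟩_g = Σ g_{ij} X^i Y^j` for vectors. -/
def vip {n : ℕ} (g : Matrix (Fin n) (Fin n) ℝ) (X Y : Fin n → ℝ) : ℝ :=
  ∑ i, ∑ j, g i j * X i * Y j

/-- `|α|²_g = Σ g^{ij} α_i α_j` for a covector `α`. -/
def cnorm2 {n : ℕ} (g : Matrix (Fin n) (Fin n) ℝ) (α : Fin n → ℝ) : ℝ :=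
  ∑ i, ∑ j, g⁻¹ i j * α i * α j

/-- Musical flat `(X♭)_i = Σ_j g_{ij} X^j`. -/
def flatT {n : ℕ} (g : Matrix (Fin n) (Fin n) ℝ) (X : Fin n → ℝ) : Fin n → ℝ :=
  fun i => ∑ j, g i j * X j

/-- The constant `m = (n+2)(n-1)/(n+1)`. -/
def mconst (n : ℕ) : ℝ := ((n : ℝ) + 2) * ((n : ℝ) - 1) / ((n : ℝ) + 1)

/-- `(Ψ ⊛_g Ψ)_{ij} = Σ Ψ^k_{uv} Ψ^a_{bc} g_{ia} g_{jk} g^{ub} g^{vc}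
      - 2 Σ Ψ^k_{jc} Ψ^a_{ib} g_{ak} g^{bc}`. -/
def circT {n : ℕ} (g : Matrix (Fin n) (Fin n) ℝ) (Ψ : Fin n → Fin n → Fin n → ℝ) :
    Fin n → Fin n → ℝ :=
  fun i j =>
    (∑ k, ∑ u, ∑ v, ∑ a, ∑ b, ∑ c,
      Ψ k u v * Ψ a b c * g i a * g j k * g⁻¹ u b * g⁻¹ v c)
    - 2 * ∑ k, ∑ c, ∑ a, ∑ b, Ψ k j c * Ψ a i b * g a k * g⁻¹ b c

/-- Stress-energy tensor `T_g(Ψ) = (1/2)|Ψ|²_g g + Ψ ⊛_g Ψ`. -/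
def stressEnergy {n : ℕ} (g : Matrix (Fin n) (Fin n) ℝ)
    (Ψ : Fin n → Fin n → Fin n → ℝ) : Fin n → Fin n → ℝ :=
  fun i j => (1 / 2) * norm2T g Ψ * g i j + circT g Ψ i j

/-- `⟨T,h⟩_g = Σ T_{ij} g^{ia} g^{jb} h_{ab}` for (0,2)-tensors. -/
def ip2 {n : ℕ} (g : Matrix (Fin n) (Fin n) ℝ) (T h : Fin n → Fin n → ℝ) : ℝ :=
  ∑ i, ∑ j, ∑ a, ∑ b, T i j * g⁻¹ i a * g⁻¹ j b * h a b


/-- Auxiliary: stress-energy with the inverse metric as an explicit argument. -/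
def SE'aux {n : ℕ} (g h : Matrix (Fin n) (Fin n) ℝ)
    (Ψ : Fin n → Fin n → Fin n → ℝ) : Fin n → Fin n → ℝ :=
  fun i j => (1 / 2) *
    (∑ i', ∑ j', ∑ k, ∑ a, ∑ b, ∑ c,
      Ψ i' j' k * h j' b * h k c * g i' a * Ψ a b c) * g i j +
    ((∑ k, ∑ u, ∑ v, ∑ a, ∑ b, ∑ c,
      Ψ k u v * Ψ a b c * g i a * g j k * h u b * h v c)
    - 2 * ∑ k, ∑ c, ∑ a, ∑ b, Ψ k j c * Ψ a i b * g a k * h b c)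

theorem SE'aux_eq {n : ℕ} (g : Matrix (Fin n) (Fin n) ℝ) (Ψ : Fin n → Fin n → Fin n → ℝ) :
    stressEnergy g Ψ = SE'aux g g⁻¹ Ψ := rfl

set_option maxRecDepth 100000 in
set_option maxHeartbeats 1000000 in
private lemma key_identity (a b c e S T : ℝ) (hrel : (a*c - b*b) * e = 1) :
    ∀ i j, SE'aux !![a, b; b, c] !![c*e, -(b*e); -(b*e), a*e]
      (fun i' j' k => ∑ l, !![c*e, -(b*e); -(b*e), a*e] i' l *
        (![![![a^2*S, a^2*T], ![a^2*T, a*(2*b*T - c*S)]],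
        ![![a^2*T, a*(2*b*T - c*S)],
          ![a*(2*b*T - c*S), 2*b*(2*b*T - c*S) - a*c*T]]] l j' k)) i j = 0 := by
  intro i j
  fin_cases i <;> fin_cases j <;>
    simp only [Fin.zero_eta, Fin.mk_one] <;>
    simp only [SE'aux, Fin.sum_univ_two, Matrix.of_apply, Matrix.cons_val',
      Matrix.cons_val_zero, Matrix.cons_val_one, Matrix.head_cons, Matrix.head_fin_const,
      Matrix.empty_val', Matrix.cons_val_fin_one]
  · linear_combination (4*a^3*b^4*c*S^2*e^3 + -8*a^3*b^5*S*T*e^3 + -8*a^4*b^2*c^2*S^2*e^3 + 16*a^4*b^3*c*S*T*e^3 + 4*a^4*b^4*T^2*e^3 + 4*a^5*c^3*S^2*e^3 + -8*a^5*b*c^2*S*T*e^3 + -8*a^5*b^2*c*T^2*e^3 + 4*a^6*c^2*T^2*e^3) * hrel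
  · linear_combination (4*a^2*b^5*c*S^2*e^3 + -8*a^2*b^6*S*T*e^3 + -8*a^3*b^3*c^2*S^2*e^3 + 16*a^3*b^4*c*S*T*e^3 + 4*a^3*b^5*T^2*e^3 + 4*a^4*b*c^3*S^2*e^3 + -8*a^4*b^2*c^2*S*T*e^3 + -8*a^4*b^3*c*T^2*e^3 + 4*a^5*b*c^2*T^2*e^3) * hrel
  · linear_combination (4*a^2*b^5*c*S^2*e^3 + -8*a^2*b^6*S*T*e^3 + -8*a^3*b^3*c^2*S^2*e^3 + 16*a^3*b^4*c*S*T*e^3 + 4*a^3*b^5*T^2*e^3 + 4*a^4*b*c^3*S^2*e^3 + -8*a^4*b^2*c^2*S*T*e^3 + -8*a^4*b^3*c*T^2*e^3 + 4*a^5*b*c^2*T^2*e^3) * hrel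
  · linear_combination (4*a^2*b^4*c^2*S^2*e^3 + -8*a^2*b^5*c*S*T*e^3 + -8*a^3*b^2*c^3*S^2*e^3 + 16*a^3*b^3*c^2*S*T*e^3 + 4*a^3*b^4*c*T^2*e^3 + 4*a^4*c^4*S^2*e^3 + -8*a^4*b*c^3*S*T*e^3 + -8*a^4*b^2*c^2*T^2*e^3 + 4*a^5*c^3*T^2*e^3) * hrel

set_option maxRecDepth 100000 in
set_option maxHeartbeats 2000000 in
/-- in dimension 2, the stress-energy tensor of the tensor obtained
from a totally symmetric, totally trace-free (0,3)-tensor vanishes identically. -/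
theorem stressEnergy_cubic_vanishes (g : Matrix (Fin 2) (Fin 2) ℝ) (hg : g.PosDef)
    (A : Fin 2 → Fin 2 → Fin 2 → ℝ)
    (hsym : ∀ i j k, A i j k = A j i k ∧ A i j k = A i k j)
    (htf : ∀ i, ∑ j, ∑ k, g⁻¹ j k * A i j k = 0)
    (α : Fin 2 → Fin 2 → Fin 2 → ℝ)
    (hα : α = fun i j k => ∑ l, g⁻¹ i l * A l j k) :
    ∀ i j, stressEnergy g α i j = 0 := by
  have hsymm : g 1 0 = g 0 1 := by
    have h := hg.1
    have := congrFun (congrFun h.symm 1) 0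
    simpa [Matrix.conjTranspose_apply] using this
  have hdet : g.det ≠ 0 := ne_of_gt hg.det_pos
  have hdet2 : g.det = g 0 0 * g 1 1 - g 0 1 * g 0 1 := by
    rw [Matrix.det_fin_two, hsymm]
  have hD0 : g 0 0 * g 1 1 - g 0 1 * g 0 1 ≠ 0 := hdet2 ▸ hdet
  have hD0' : g 0 0 * g 1 1 - g 0 1 ^ 2 ≠ 0 := by rw [sq]; exact hD0
  have hD0'' : -g 0 1 ^ 2 + g 0 0 * g 1 1 ≠ 0 := by rw [neg_add_eq_sub]; exact hD0'
  have hD0''' : g 1 1 * g 0 0 - g 0 1 ^ 2 ≠ 0 := by rw [mul_comm]; exact hD0'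
  have ha0 : g 0 0 ≠ 0 := by
    have : (0:ℝ) < g 0 0 := hg.diag_pos
    exact ne_of_gt this
  have hinv : g⁻¹ = !![g 1 1 / (g 0 0 * g 1 1 - g 0 1 * g 0 1),
      -(g 0 1) / (g 0 0 * g 1 1 - g 0 1 * g 0 1);
      -(g 0 1) / (g 0 0 * g 1 1 - g 0 1 * g 0 1),
      g 0 0 / (g 0 0 * g 1 1 - g 0 1 * g 0 1)] := by
    apply Matrix.inv_eq_right_inv
    ext i j
    fin_cases i <;> fin_cases j <;>
      simp [Matrix.mul_apply, Fin.sum_univ_two, hsymm] <;>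
      field_simp [hD0', hD0''] <;> ring
  have hp : g⁻¹ 0 0 = g 1 1 / (g 0 0 * g 1 1 - g 0 1 * g 0 1) := by rw [hinv]; simp
  have hq : g⁻¹ 0 1 = -(g 0 1) / (g 0 0 * g 1 1 - g 0 1 * g 0 1) := by rw [hinv]; simp
  have hq' : g⁻¹ 1 0 = -(g 0 1) / (g 0 0 * g 1 1 - g 0 1 * g 0 1) := by rw [hinv]; simp
  have hr : g⁻¹ 1 1 = g 0 0 / (g 0 0 * g 1 1 - g 0 1 * g 0 1) := by rw [hinv]; simp
  have e010 : A 0 1 0 = A 0 0 1 := ((hsym 0 0 1).2).symm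
  have e100 : A 1 0 0 = A 0 0 1 := by
    rw [(hsym 1 0 0).1, (hsym 0 1 0).2]
  have e101 : A 1 0 1 = A 0 1 1 := (hsym 1 0 1).1
  have e110 : A 1 1 0 = A 0 1 1 := by
    rw [(hsym 1 1 0).2, (hsym 1 0 1).1]
  have h0 := htf 0
  have h1 := htf 1
  simp only [Fin.sum_univ_two, hp, hq, hq', hr, e010, e100, e101, e110] at h0 h1
  have h0' : g 1 1 * A 0 0 0 - 2 * g 0 1 * A 0 0 1 + g 0 0 * A 0 1 1 = 0 := by
    field_simp [hD0'''] at h0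
    have h2 : ((g 0 0 * g 1 1 - g 0 1 * g 0 1) * (g 0 0 * g 1 1 - g 0 1 * g 0 1)) *
        (g 1 1 * A 0 0 0 - 2 * g 0 1 * A 0 0 1 + g 0 0 * A 0 1 1) =
        ((g 0 0 * g 1 1 - g 0 1 * g 0 1) * (g 0 0 * g 1 1 - g 0 1 * g 0 1)) * 0 := by
      linear_combination (g 0 0 * g 1 1 - g 0 1 * g 0 1) ^ 2 * h0
    exact mul_left_cancel₀ (mul_ne_zero hD0 hD0) h2
  have h1' : g 1 1 * A 0 0 1 - 2 * g 0 1 * A 0 1 1 + g 0 0 * A 1 1 1 = 0 := by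
    field_simp [hD0'''] at h1
    have h2 : ((g 0 0 * g 1 1 - g 0 1 * g 0 1) * (g 0 0 * g 1 1 - g 0 1 * g 0 1)) *
        (g 1 1 * A 0 0 1 - 2 * g 0 1 * A 0 1 1 + g 0 0 * A 1 1 1) =
        ((g 0 0 * g 1 1 - g 0 1 * g 0 1) * (g 0 0 * g 1 1 - g 0 1 * g 0 1)) * 0 := by
      linear_combination (g 0 0 * g 1 1 - g 0 1 * g 0 1) ^ 2 * h1
    exact mul_left_cancel₀ (mul_ne_zero hD0 hD0) h2
  have hu : A 0 1 1 = (2 * g 0 1 * A 0 0 1 - g 1 1 * A 0 0 0) / g 0 0 := by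
    field_simp
    linarith [h0']
  have hv : A 1 1 1 = (2 * g 0 1 * ((2 * g 0 1 * A 0 0 1 - g 1 1 * A 0 0 0) / g 0 0)
      - g 1 1 * A 0 0 1) / g 0 0 := by
    rw [← hu]
    field_simp
    linarith [h1']
  obtain ⟨a, b, c, hga, hgb, hgc⟩ :
      ∃ a b c, g 0 0 = a ∧ g 0 1 = b ∧ g 1 1 = c := ⟨_, _, _, rfl, rfl, rfl⟩
  rw [hga, hgb, hgc] at hD0 hinv
  rw [hga] at ha0
  rw [hga, hgb, hgc] at hu hv
  obtain ⟨d, hd⟩ : ∃ d, a * c - b * b = d := ⟨_, rfl⟩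
  rw [hd] at hD0 hinv
  obtain ⟨S, T, hAs, hAt⟩ : ∃ S T, A 0 0 0 = a^2 * S ∧ A 0 0 1 = a^2 * T :=
    ⟨A 0 0 0 / a^2, A 0 0 1 / a^2, by field_simp, by field_simp⟩
  rw [hAs, hAt] at hu hv
  have hgmat : g = !![a, b; b, c] := by
    ext i j; fin_cases i <;> fin_cases j <;> simp [hga, hgb, hgc, hsymm]
  have hu' : A 0 1 1 = a * (2*b*T - c*S) := by
    rw [hu]; field_simp
  have hv' : A 1 1 1 = 2*b*(2*b*T - c*S) - a*c*T := by
    rw [hv]; field_simp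
  have hAfun : A = fun i j k =>
      ![![![a^2*S, a^2*T], ![a^2*T, a*(2*b*T - c*S)]],
        ![![a^2*T, a*(2*b*T - c*S)],
          ![a*(2*b*T - c*S), 2*b*(2*b*T - c*S) - a*c*T]]] i j k := by
    funext i j k
    fin_cases i <;> fin_cases j <;> fin_cases k <;>
      simp [hAs, hAt, e010, e100, e101, e110, hu', hv']
  obtain ⟨e, he⟩ : ∃ x, d⁻¹ = x := ⟨_, rfl⟩
  have hrel : (a*c - b*b) * e = 1 := by
    rw [hd, ← he]; exact mul_inv_cancel₀ hD0
  have hinv2 : g⁻¹ = !![c*e, -(b*e); -(b*e), a*e] := by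
    rw [hinv]
    ext i j
    fin_cases i <;> fin_cases j <;>
      simp [div_eq_mul_inv, he]
  intro i j
  subst hα
  rw [SE'aux_eq, hinv2, hAfun, hgmat]
  exact key_identity a b c e S T hrel i j

end ProjFunctional
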